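/- Let F be a nonempty family of holomorphic injective functions f : 𝔻 → ℂ with f(0) = 0 and f'(0) = 1, which is closed under omitted-value Möbius compositions: whenever f ∈ F and c ∈ ℂ \ f(𝔻), the function z ↦ c·f(z)/(c − f(z)) also belongs to F. Set A = sup_{f ∈ F} |f''(0)/2|, and assume 0 < A < ∞. Then for every f ∈ F the image f(𝔻) contains the open disk {w ∈ ℂ : |w| < 1/(2A)}. -/

import Mathlib

open Complex Metric

/-- Lemma 1 (covering part): for a nonempty family `F` of normalized univalent functions on
the unit disk closed under omitted-value Möbius compositions, with
`A = sup_{f ∈ F} |a₂(f)|` satisfying `0 < A < ∞`, every `f ∈ F` covers the disk of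
radius `1/(2A)` about the origin. -/
theorem koebe_type_covering (F : Set (ℂ → ℂ)) (hne : F.Nonempty)
    (hF : ∀ f ∈ F, DifferentiableOn ℂ f (ball (0 : ℂ) 1) ∧
      Set.InjOn f (ball (0 : ℂ) 1) ∧ f 0 = 0 ∧ deriv f 0 = 1)
    (hclosed : ∀ f ∈ F, ∀ c ∉ f '' ball (0 : ℂ) 1,
      (fun z => c * f z / (c - f z)) ∈ F)
    (A : ℝ) (hApos : 0 < A)
    (hA : IsLUB ((fun f => ‖iteratedDeriv 2 f 0 / 2‖) '' F) A) :
    ∀ f ∈ F, ball (0 : ℂ) (1 / (2 * A)) ⊆ f '' ball (0 : ℂ) 1 := by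
  have hub : ∀ f ∈ F, ‖iteratedDeriv 2 f 0 / 2‖ ≤ A := fun f hf =>
    hA.1 ⟨f, hf, rfl⟩
  intro f hf w hw
  by_contra hwnot
  obtain ⟨hdiff, hinj, hf0, hf'0⟩ := hF f hf
  have h0U : (0 : ℂ) ∈ ball (0 : ℂ) 1 := by simp
  have hw0 : w ≠ 0 := by
    rintro rfl
    exact hwnot ⟨0, h0U, hf0⟩
  have hg := hclosed f hf w hwnot
  have han : AnalyticOnNhd ℂ f (ball (0 : ℂ) 1) := hdiff.analyticOnNhd isOpen_ball
  have hfz : ∀ z ∈ ball (0 : ℂ) 1, w - f z ≠ 0 := by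
    intro z hz h
    exact hwnot ⟨z, hz, by linear_combination -h⟩
  have df : ∀ z ∈ ball (0 : ℂ) 1, HasDerivAt f (deriv f z) z := fun z hz =>
    (han z hz).differentiableAt.hasDerivAt
  set g : ℂ → ℂ := fun z => w * f z / (w - f z) with hgdef
  set h : ℂ → ℂ := fun z => w ^ 2 * deriv f z / (w - f z) ^ 2 with hhdef
  have hg_deriv : ∀ z ∈ ball (0 : ℂ) 1, HasDerivAt g (h z) z := by
    intro z hz
    have hN : HasDerivAt (fun z => w * f z) (w * deriv f z) z := (df z hz).const_mul w
    have hD : HasDerivAt (fun z => w - f z) (-(deriv f z)) z := (df z hz).const_sub w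
    have := hN.div hD (hfz z hz)
    convert this using 1
    · rfl
    · rfl
    · rfl
    field_simp [hhdef]
    ring
  have heq : Set.EqOn (deriv g) h (ball (0 : ℂ) 1) := fun z hz => (hg_deriv z hz).deriv
  have hev : deriv g =ᶠ[nhds (0 : ℂ)] h :=
    Filter.eventuallyEq_of_mem (isOpen_ball.mem_nhds h0U) heq
  have hd2 : iteratedDeriv 2 g 0 = deriv h 0 := by
    rw [iteratedDeriv_succ, iteratedDeriv_one]
    exact hev.deriv_eq
  have hdf' : HasDerivAt (deriv f) (deriv (deriv f) 0) 0 :=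
    ((han.deriv 0 h0U).differentiableAt).hasDerivAt
  have hh_deriv : HasDerivAt h (deriv (deriv f) 0 + 2 / w) 0 := by
    have hN : HasDerivAt (fun z => w ^ 2 * deriv f z) (w ^ 2 * deriv (deriv f) 0) 0 :=
      hdf'.const_mul (w ^ 2)
    have hD : HasDerivAt (fun z => (w - f z) ^ 2)
        ((2 : ℕ) * (w - f 0) ^ (2 - 1) * (-(deriv f 0))) 0 :=
      ((df 0 h0U).const_sub w).pow 2
    have hD0 : (w - f 0) ^ 2 ≠ 0 := pow_ne_zero _ (hfz 0 h0U)
    have := hN.div hD hD0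
    convert this using 1
    · rfl
    · rfl
    · rfl
    rw [hf0, hf'0]
    field_simp
    ring
  have hgF := hub _ hg
  have hfF := hub f hf
  have hg2 : iteratedDeriv 2 g 0 = deriv (deriv f) 0 + 2 / w := by
    rw [hd2, hh_deriv.deriv]
  have hf2 : iteratedDeriv 2 f 0 = deriv (deriv f) 0 := by
    rw [iteratedDeriv_succ, iteratedDeriv_one]
  rw [hg2] at hgF
  rw [hf2] at hfF
  -- |1/w| ≤ 2A
  have key : ‖1 / w‖ ≤ 2 * A := by
    have : ‖(deriv (deriv f) 0 + 2 / w) / 2 - deriv (deriv f) 0 / 2‖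
        ≤ A + A := by
      calc ‖(deriv (deriv f) 0 + 2 / w) / 2 - deriv (deriv f) 0 / 2‖
          ≤ ‖(deriv (deriv f) 0 + 2 / w) / 2‖
            + ‖deriv (deriv f) 0 / 2‖ := by
            simpa using norm_sub_le ((deriv (deriv f) 0 + 2 / w) / 2)
              (deriv (deriv f) 0 / 2)
        _ ≤ A + A := add_le_add hgF hfF
    have heq2 : (deriv (deriv f) 0 + 2 / w) / 2 - deriv (deriv f) 0 / 2 = 1 / w := by
      field_simp
      ring
    rw [heq2] at this
    linarith
  have hwabs : ‖w‖ < 1 / (2 * A) := by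
    simpa [Complex.dist_eq] using hw
  have hwpos : 0 < ‖w‖ := by
    simpa using hw0
  rw [norm_div, norm_one] at key
  have h2A : 0 < 2 * A := by linarith
  have : 1 ≤ 2 * A * ‖w‖ := by
    rw [div_le_iff₀ hwpos] at key
    linarith
  have : 1 / (2 * A) ≤ ‖w‖ := by
    rw [div_le_iff₀ h2A]
    linarith
  linarith
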